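/- Under the risk-neutral log-normal model, the expected discounted call payoff equals the Black-Scholes formula: E[e^{−rT}(x·exp(σW_T − σ²T/2 + rT) − K)⁺] = x N(d₁) − K e^{−rT} N(d₀), where d₀ = (1/(σ√T))log(x e^{rT}/K) − σ√T/2 and d₁ = d₀ + σ√T. -/

import Mathlib

open MeasureTheory ProbabilityTheory Real
open scoped ENNReal NNReal

/-- Standard normal cumulative distribution function. -/
noncomputable def stdNormalCDF (z : ℝ) : ℝ :=
  ∫ y in Set.Iic z, (Real.sqrt (2 * Real.pi))⁻¹ * Real.exp (-y ^ 2 / 2)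

/-- Standard normal density. -/
noncomputable def stdPDF (z : ℝ) : ℝ :=
  (Real.sqrt (2 * Real.pi))⁻¹ * Real.exp (-z ^ 2 / 2)

lemma stdPDF_eq_gaussianPDFReal : gaussianPDFReal 0 1 = stdPDF := by
  funext z
  simp [gaussianPDFReal, stdPDF]

lemma stdPDF_measurable : Measurable stdPDF :=
  ((((measurable_id.pow_const 2).neg).div_const 2).exp).const_mul _

lemma stdPDF_integrable : Integrable stdPDF := by
  rw [← stdPDF_eq_gaussianPDFReal]
  exact integrable_gaussianPDFReal 0 1

lemma stdPDF_neg (z : ℝ) : stdPDF (-z) = stdPDF z := by simp [stdPDF]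

lemma integral_stdPDF_Ioi (a : ℝ) : ∫ z in Set.Ioi a, stdPDF z = stdNormalCDF (-a) := by
  calc ∫ z in Set.Ioi a, stdPDF z = ∫ z in Set.Ioi a, stdPDF (-z) := by
        simp_rw [stdPDF_neg]
    _ = ∫ z in Set.Iic (-a), stdPDF z := integral_comp_neg_Ioi a stdPDF
    _ = stdNormalCDF (-a) := rfl

lemma integral_stdPDF_shift_Ioi (a t : ℝ) :
    ∫ z in Set.Ioi a, stdPDF (z - t) = stdNormalCDF (t - a) := by
  rw [← integral_indicator measurableSet_Ioi]
  have h : (Set.Ioi a).indicator (fun z => stdPDF (z - t))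
      = fun z => (Set.Ioi (a - t)).indicator stdPDF (z - t) := by
    funext z
    simp only [Set.indicator_apply, Set.mem_Ioi, sub_lt_sub_iff_right]
  rw [h, integral_sub_right_eq_self ((Set.Ioi (a - t)).indicator stdPDF) t,
    integral_indicator measurableSet_Ioi, integral_stdPDF_Ioi, neg_sub]

lemma integral_gaussianReal_one (g : ℝ → ℝ) :
    ∫ z, g z ∂(gaussianReal 0 1) = ∫ z, stdPDF z * g z := by
  rw [gaussianReal_of_var_ne_zero 0 one_ne_zero]
  have hd : gaussianPDF 0 1 = fun z => ((gaussianPDFReal 0 1 z).toNNReal : ℝ≥0∞) := rfl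
  rw [hd, integral_withDensity_eq_integral_smul
    (Measurable.real_toNNReal (measurable_gaussianPDFReal 0 1)) g]
  congr 1
  funext z
  rw [NNReal.smul_def, Real.coe_toNNReal _ (gaussianPDFReal_nonneg 0 1 z),
    stdPDF_eq_gaussianPDFReal, smul_eq_mul]

lemma stdPDF_shift_eq (s z : ℝ) :
    stdPDF (z - s) = Real.exp (s * z - s ^ 2 / 2) * stdPDF z := by
  have h : Real.exp (-(z - s) ^ 2 / 2)
      = Real.exp (s * z - s ^ 2 / 2) * Real.exp (-z ^ 2 / 2) := by
    rw [← Real.exp_add]; congr 1; ring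
  simp only [stdPDF]
  rw [h]; ring

theorem bs_formula_as_expectation
    {Ω : Type*} [MeasureSpace Ω] [IsProbabilityMeasure (ℙ : Measure Ω)]
    (x K σ T r : ℝ) (hx : 0 < x) (hK : 0 < K) (hσ : 0 < σ) (hT : 0 < T)
    (W : Ω → ℝ) (hW : Measure.map W ℙ = gaussianReal 0 (Real.toNNReal T)) :
    (∫ ω, Real.exp (-r * T) *
        max (x * Real.exp (σ * W ω - σ ^ 2 * T / 2 + r * T) - K) 0 ∂ℙ)
      = x * stdNormalCDF ((σ * Real.sqrt T)⁻¹ * Real.log (x * Real.exp (r * T) / K)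
            - σ * Real.sqrt T / 2 + σ * Real.sqrt T)
        - K * Real.exp (-r * T) *
          stdNormalCDF ((σ * Real.sqrt T)⁻¹ * Real.log (x * Real.exp (r * T) / K)
            - σ * Real.sqrt T / 2) := by
  have hsqT : 0 < Real.sqrt T := Real.sqrt_pos.mpr hT
  set s : ℝ := σ * Real.sqrt T with hs_def
  have hs : 0 < s := mul_pos hσ hsqT
  set c : ℝ := Real.log (x * Real.exp (r * T) / K) with hc_def
  set z₀ : ℝ := s / 2 - c / s with hz₀_def
  set G : ℝ → ℝ :=
    fun z => Real.exp (-r * T) * max (x * Real.exp (s * z - s ^ 2 / 2 + r * T) - K) 0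
    with hG_def
  have hs2 : s ^ 2 = σ ^ 2 * T := by
    rw [hs_def, mul_pow, Real.sq_sqrt hT.le]
  have hWm : AEMeasurable W ℙ := aemeasurable_of_map_neZero (by rw [hW]; infer_instance)
  have hZm : AEMeasurable (fun ω => (Real.sqrt T)⁻¹ * W ω) ℙ := hWm.const_mul _
  have hZmap : Measure.map (fun ω => (Real.sqrt T)⁻¹ * W ω) ℙ = gaussianReal 0 1 := by
    have h1 : Measure.map (fun ω => (Real.sqrt T)⁻¹ * W ω) ℙ
        = Measure.map (fun y => (Real.sqrt T)⁻¹ * y) (Measure.map W ℙ) :=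
      (AEMeasurable.map_map_of_aemeasurable
        (measurable_id.const_mul _).aemeasurable hWm).symm
    rw [h1, hW, gaussianReal_map_const_mul, mul_zero]
    congr 1
    rw [← NNReal.coe_inj]
    push_cast
    rw [Real.coe_toNNReal _ hT.le, inv_pow, Real.sq_sqrt hT.le,
      inv_mul_cancel₀ hT.ne']
  have hGm : Measurable G := by
    apply Measurable.const_mul
    exact (((measurable_id.const_mul s).sub_const _).add_const _).exp.const_mul x
      |>.sub_const K |>.max measurable_const
  have step1 : (∫ ω, Real.exp (-r * T) *
        max (x * Real.exp (σ * W ω - σ ^ 2 * T / 2 + r * T) - K) 0 ∂ℙ)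
      = ∫ z, G z ∂(gaussianReal 0 1) := by
    rw [← hZmap, integral_map hZm hGm.aestronglyMeasurable]
    congr 1
    funext ω
    rw [hG_def]
    have h1 : s * ((Real.sqrt T)⁻¹ * W ω) = σ * W ω := by
      rw [hs_def]
      field_simp
    simp only [h1, hs2]
  rw [step1, integral_gaussianReal_one G]
  -- key facts about the exercise boundary
  have hXK : 0 < x * Real.exp (r * T) / K := by positivity
  have hec : Real.exp c = x * Real.exp (r * T) / K := Real.exp_log hXK
  have hKx : K = x * Real.exp (r * T) * Real.exp (-c) := by
    rw [Real.exp_neg, hec]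
    field_simp
  have harg : ∀ z : ℝ, x * Real.exp (s * z - s ^ 2 / 2 + r * T) - K
      = x * Real.exp (r * T) * (Real.exp (s * z - s ^ 2 / 2) - Real.exp (-c)) := by
    intro z
    rw [hKx, Real.exp_add]
    ring
  have hz₀s : s * z₀ = s ^ 2 / 2 - c := by
    rw [hz₀_def]
    field_simp
  have hpt : (fun z => stdPDF z * G z)
      = Set.indicator (Set.Ioi z₀)
        (fun z => x * stdPDF (z - s) - K * Real.exp (-r * T) * stdPDF z) := by
    funext z
    simp only [hG_def]
    by_cases hz : z ∈ Set.Ioi z₀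
    · rw [Set.indicator_of_mem hz]
      have hzz : s * z₀ < s * z := by
        exact (mul_lt_mul_iff_right₀ hs).mpr hz
      have h1 : Real.exp (-c) ≤ Real.exp (s * z - s ^ 2 / 2) := by
        apply Real.exp_le_exp.mpr
        rw [hz₀s] at hzz
        linarith
      have hpos : 0 ≤ x * Real.exp (s * z - s ^ 2 / 2 + r * T) - K := by
        rw [harg z]
        have := sub_nonneg.mpr h1
        positivity
      rw [max_eq_left hpos, stdPDF_shift_eq, Real.exp_add, neg_mul, Real.exp_neg]
      have hR : Real.exp (r * T) ≠ 0 := (Real.exp_pos _).ne'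
      field_simp
    · rw [Set.indicator_of_notMem hz]
      have hzz : s * z ≤ s * z₀ := by
        have : z ≤ z₀ := not_lt.mp hz
        exact (mul_le_mul_iff_right₀ hs).mpr this
      have h1 : Real.exp (s * z - s ^ 2 / 2) ≤ Real.exp (-c) := by
        apply Real.exp_le_exp.mpr
        rw [hz₀s] at hzz
        linarith
      have hneg : x * Real.exp (s * z - s ^ 2 / 2 + r * T) - K ≤ 0 := by
        rw [harg z]
        have h2 : Real.exp (s * z - s ^ 2 / 2) - Real.exp (-c) ≤ 0 := by linarith
        have h3 : 0 ≤ x * Real.exp (r * T) := by positivity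
        exact mul_nonpos_of_nonneg_of_nonpos h3 h2
      rw [max_eq_right hneg]
      simp
  rw [hpt, integral_indicator measurableSet_Ioi]
  have hint1 : IntegrableOn (fun z => x * stdPDF (z - s)) (Set.Ioi z₀) :=
    ((stdPDF_integrable.comp_sub_right s).const_mul x).integrableOn
  have hint2 : IntegrableOn (fun z => K * Real.exp (-r * T) * stdPDF z) (Set.Ioi z₀) :=
    (stdPDF_integrable.const_mul _).integrableOn
  rw [integral_sub hint1 hint2, integral_const_mul, integral_const_mul,
    integral_stdPDF_shift_Ioi, integral_stdPDF_Ioi]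
  have e1 : s - z₀ = (σ * Real.sqrt T)⁻¹ * Real.log (x * Real.exp (r * T) / K)
      - σ * Real.sqrt T / 2 + σ * Real.sqrt T := by
    rw [hz₀_def]
    field_simp
    ring
  have e2 : -z₀ = (σ * Real.sqrt T)⁻¹ * Real.log (x * Real.exp (r * T) / K)
      - σ * Real.sqrt T / 2 := by
    rw [hz₀_def]
    field_simp
    ring
  rw [e1, e2]
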